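/- Let 𝔾 be a finite group and k ≥ 2 an integer. Then for all functions f, g : 𝔾 → ℂ one has the triangle inequality T_k(f+g)^{1/(2k)} ≤ T_k(f)^{1/(2k)} + T_k(g)^{1/(2k)}, and moreover T_k(f)^{1/(2k)} ≥ (Σ_{x ∈ 𝔾} |f(x)|^{2k})^{1/(2k)}. -/

import Mathlib

open Finset

/-- Alternating product `g₁ g₂⁻¹ g₃ g₄⁻¹ ⋯` (exponent `+1` at odd positions,
`−1` at even positions, 1-indexed). -/
def altProd {M : Type*} [Monoid M] [Inv M] {k : ℕ} (g : Fin k → M) : M :=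
  (List.ofFn fun i : Fin k => if (i : ℕ) % 2 = 0 then g i else (g i)⁻¹).prod

/-- `W_{h₁,…,h_k}(x)`: the sum over tuples with alternating product `x` of the product of
`h_j(g_j)` at odd positions and `conj(h_j(g_j))` at even positions (1-indexed). -/
noncomputable def Wfun {G : Type*} [Group G] [Fintype G] [DecidableEq G] {k : ℕ}
    (h : Fin k → G → ℂ) (x : G) : ℂ :=
  ∑ t : Fin k → G,
    if altProd t = x then
      ∏ i : Fin k, (if (i : ℕ) % 2 = 0 then h i (t i) else (starRingEnd ℂ) (h i (t i)))
    else 0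

/-- `T_k(f) = Σ_x |W_{f,…,f}(x)|²`. -/
noncomputable def TkF1 {G : Type*} [Group G] [Fintype G] [DecidableEq G] (k : ℕ)
    (f : G → ℂ) : ℝ :=
  ∑ x : G, ‖Wfun (fun _ : Fin k => f) x‖ ^ 2


section MatrixLemmas
open Matrix
open scoped ComplexOrder


lemma entry_conj_diag {n : Type*} [Fintype n] [DecidableEq n]
    (U : Matrix n n ℂ) (d : n → ℝ) (j : n) :
    ((U * diagonal (fun i => (d i : ℂ)) * Uᴴ) j j).re
      = ∑ i, d i * Complex.normSq (U j i) := by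
  have : (U * diagonal (fun i => (d i : ℂ)) * Uᴴ) j j
      = ∑ i, ((d i : ℂ) * (Complex.normSq (U j i) : ℂ)) := by
    rw [Matrix.mul_assoc, Matrix.mul_apply]
    refine Finset.sum_congr rfl fun i _ => ?_
    rw [Matrix.diagonal_mul, Matrix.conjTranspose_apply, Complex.star_def,
      ← Complex.mul_conj]
    ring
  rw [this, Complex.re_sum]
  refine Finset.sum_congr rfl fun i _ => ?_
  rw [← Complex.ofReal_mul, Complex.ofReal_re]

lemma conj_pow_aux {n : Type*} [Fintype n] [DecidableEq n]
    (U B : Matrix n n ℂ) (hU : U * Uᴴ = 1) (hU' : Uᴴ * U = 1) (k : ℕ) :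
    (U * B * Uᴴ) ^ k = U * B ^ k * Uᴴ := by
  induction k with
  | zero => simp [hU]
  | succ k ih =>
      rw [pow_succ, ih, pow_succ]
      calc U * B ^ k * Uᴴ * (U * B * Uᴴ) = U * B ^ k * (Uᴴ * U) * B * Uᴴ := by
            noncomm_ring
        _ = U * (B ^ k * B) * Uᴴ := by rw [hU']; noncomm_ring

lemma psd_diag_pow_le {n : Type*} [Fintype n] [DecidableEq n] {X : Matrix n n ℂ}
    (hX : X.PosSemidef) (k : ℕ) (j : n) :
    (X j j).re ^ k ≤ ((X ^ k) j j).re := by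
  have hH := hX.isHermitian
  set U : Matrix n n ℂ := (hH.eigenvectorUnitary : Matrix n n ℂ) with hUdef
  have hU1 : U * Uᴴ = 1 := by
    rw [← Matrix.star_eq_conjTranspose]
    exact mem_unitaryGroup_iff.mp hH.eigenvectorUnitary.2
  have hU2 : Uᴴ * U = 1 := by
    rw [← Matrix.star_eq_conjTranspose]
    exact mem_unitaryGroup_iff'.mp hH.eigenvectorUnitary.2
  have hspec : X = U * diagonal (fun i => (hH.eigenvalues i : ℂ)) * Uᴴ := by
    have := hH.spectral_theorem
    rw [← Matrix.star_eq_conjTranspose] at *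
    exact this
  have hpow : X ^ k = U * diagonal (fun i => ((hH.eigenvalues i ^ k : ℝ) : ℂ)) * Uᴴ := by
    conv_lhs => rw [hspec]
    rw [conj_pow_aux U _ hU1 hU2, Matrix.diagonal_pow]
    congr 1
    congr 1
    funext i
    push_cast
    rfl
  have hw : ∑ i, Complex.normSq (U j i) = 1 := by
    have h11 : (U * Uᴴ) j j = 1 := by rw [hU1]; simp [Matrix.one_apply]
    rw [Matrix.mul_apply] at h11
    have : (∑ i, ((Complex.normSq (U j i) : ℝ) : ℂ)) = 1 := by
      rw [← h11]
      refine Finset.sum_congr rfl fun i _ => ?_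
      rw [Matrix.conjTranspose_apply, Complex.star_def, Complex.mul_conj]
    have := congrArg Complex.re this
    rw [Complex.re_sum] at this
    simpa using this
  have h1 : (X j j).re = ∑ i, hH.eigenvalues i * Complex.normSq (U j i) := by
    conv_lhs => rw [hspec]
    exact entry_conj_diag U _ j
  have h2 : ((X ^ k) j j).re = ∑ i, hH.eigenvalues i ^ k * Complex.normSq (U j i) := by
    rw [hpow]
    exact entry_conj_diag U _ j
  rw [h1, h2]
  have := Real.pow_arith_mean_le_arith_mean_pow Finset.univ
    (fun i => Complex.normSq (U j i)) (fun i => hH.eigenvalues i)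
    (fun i _ => Complex.normSq_nonneg _) hw
    (fun i _ => hX.eigenvalues_nonneg i) k
  calc (∑ i, hH.eigenvalues i * Complex.normSq (U j i)) ^ k
      = (∑ i, Complex.normSq (U j i) * hH.eigenvalues i) ^ k := by
        congr 1; exact Finset.sum_congr rfl fun i _ => mul_comm _ _
    _ ≤ ∑ i, Complex.normSq (U j i) * hH.eigenvalues i ^ k := this
    _ = ∑ i, hH.eigenvalues i ^ k * Complex.normSq (U j i) :=
        Finset.sum_congr rfl fun i _ => mul_comm _ _


-- Cauchy-Schwarz for columns
lemma col_cs {n : Type*} [Fintype n] (r p : n → ℂ) :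
    (∑ i, (starRingEnd ℂ) (r i) * p i).re ≤
      Real.sqrt (∑ i, Complex.normSq (r i)) * Real.sqrt (∑ i, Complex.normSq (p i)) := by
  let x : EuclideanSpace ℂ n := WithLp.toLp 2 r
  let y : EuclideanSpace ℂ n := WithLp.toLp 2 p
  have h1 : (inner ℂ x y : ℂ) = ∑ i, (starRingEnd ℂ) (r i) * p i := by
    simp [x, y, PiLp.inner_apply, mul_comm]
  have h2 : ‖x‖ = Real.sqrt (∑ i, Complex.normSq (r i)) := by
    rw [EuclideanSpace.norm_eq]
    congr 1
    exact Finset.sum_congr rfl fun i _ => by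
      rw [Complex.sq_norm]
  have h3 : ‖y‖ = Real.sqrt (∑ i, Complex.normSq (p i)) := by
    rw [EuclideanSpace.norm_eq]
    congr 1
    exact Finset.sum_congr rfl fun i _ => by
      rw [Complex.sq_norm]
  calc (∑ i, (starRingEnd ℂ) (r i) * p i).re = (inner ℂ x y : ℂ).re := by rw [h1]
    _ ≤ ‖(inner ℂ x y : ℂ)‖ := Complex.re_le_norm _
    _ = ‖(inner ℂ x y : ℂ)‖ := rfl
    _ ≤ ‖x‖ * ‖y‖ := norm_inner_le_norm x y
    _ = _ := by rw [h2, h3]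

lemma diag_conjTranspose_mul {n : Type*} [Fintype n] (P : Matrix n n ℂ) (j : n) :
    (Pᴴ * P) j j = ((∑ i, Complex.normSq (P i j) : ℝ) : ℂ) := by
  rw [Matrix.mul_apply]
  push_cast
  refine Finset.sum_congr rfl fun i _ => ?_
  rw [Matrix.conjTranspose_apply, Complex.star_def]
  rw [← Complex.normSq_eq_conj_mul_self]


lemma trace_pow_psd {n : Type*} [Fintype n] [DecidableEq n] {X : Matrix n n ℂ}
    (hX : X.PosSemidef) (k : ℕ) :
    ((X ^ k).trace).re = ∑ j, hX.1.eigenvalues j ^ k := by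
  have hH := hX.1
  set U : Matrix n n ℂ := (hH.eigenvectorUnitary : Matrix n n ℂ) with hUdef
  have hU1 : U * Uᴴ = 1 := by
    rw [← Matrix.star_eq_conjTranspose]
    exact mem_unitaryGroup_iff.mp hH.eigenvectorUnitary.2
  have hU2 : Uᴴ * U = 1 := by
    rw [← Matrix.star_eq_conjTranspose]
    exact mem_unitaryGroup_iff'.mp hH.eigenvectorUnitary.2
  have hspec : X = U * diagonal (fun i => (hH.eigenvalues i : ℂ)) * Uᴴ := by
    have := hH.spectral_theorem
    rw [← Matrix.star_eq_conjTranspose] at *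
    exact this
  have hpow : X ^ k = U * diagonal (fun i => ((hH.eigenvalues i ^ k : ℝ) : ℂ)) * Uᴴ := by
    conv_lhs => rw [hspec]
    rw [conj_pow_aux U _ hU1 hU2, Matrix.diagonal_pow]
    congr 1
    congr 1
    funext i
    push_cast
    rfl
  rw [hpow, Matrix.trace_mul_cycle, hU2, Matrix.one_mul, Matrix.trace_diagonal]
  rw [Complex.re_sum]
  exact Finset.sum_congr rfl fun i _ => Complex.ofReal_re _

lemma trace_pow_psd_nonneg {n : Type*} [Fintype n] [DecidableEq n] {X : Matrix n n ℂ}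
    (hX : X.PosSemidef) (k : ℕ) : 0 ≤ ((X ^ k).trace).re := by
  rw [trace_pow_psd hX k]
  exact Finset.sum_nonneg fun j _ => pow_nonneg (hX.eigenvalues_nonneg j) k

lemma schatten_core {n : Type*} [Fintype n] [DecidableEq n] {k : ℕ} (hk : 1 ≤ k)
    (A B : Matrix n n ℂ) :
    ((((A + B)ᴴ * (A + B)) ^ k).trace.re) ^ (1 / (2 * (k : ℝ)))
      ≤ (((Aᴴ * A) ^ k).trace.re) ^ (1 / (2 * (k : ℝ)))
        + (((Bᴴ * B) ^ k).trace.re) ^ (1 / (2 * (k : ℝ))) := by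
  have hk' : (1:ℝ) ≤ k := by exact_mod_cast hk
  have h2k : (1:ℝ) < 2 * k := by linarith
  have h2kpos : (0:ℝ) < 2 * k := by linarith
  set C := A + B with hC
  have hPSD : (Cᴴ * C).PosSemidef := posSemidef_conjTranspose_mul_self C
  have hH := hPSD.1
  set U : Matrix n n ℂ := (hH.eigenvectorUnitary : Matrix n n ℂ) with hUdef
  have hU1 : U * Uᴴ = 1 := by
    rw [← Matrix.star_eq_conjTranspose]
    exact mem_unitaryGroup_iff.mp hH.eigenvectorUnitary.2
  have hU2 : Uᴴ * U = 1 := by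
    rw [← Matrix.star_eq_conjTranspose]
    exact mem_unitaryGroup_iff'.mp hH.eigenvectorUnitary.2
  set μ : n → ℝ := hH.eigenvalues with hμdef
  have hspec : Cᴴ * C = U * diagonal (fun i => (μ i : ℂ)) * Uᴴ := by
    have := hH.spectral_theorem
    rw [← Matrix.star_eq_conjTranspose] at *
    exact this
  have hμ0 : ∀ j, 0 ≤ μ j := fun j => hPSD.eigenvalues_nonneg j
  set lam : n → ℝ := fun j => Real.sqrt (μ j) with hlamdef
  have hlam0 : ∀ j, 0 ≤ lam j := fun j => Real.sqrt_nonneg _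
  have hlamsq : ∀ j, lam j ^ 2 = μ j := fun j => Real.sq_sqrt (hμ0 j)
  set P := A * U with hP
  set Q := B * U with hQ
  set R := C * U with hR
  have hRPQ : ∀ i j, R i j = P i j + Q i j := by
    intro i j; rw [hP, hQ, hR, hC, Matrix.add_mul]; rfl
  have hRR : Rᴴ * R = diagonal (fun j => (μ j : ℂ)) := by
    rw [hR, Matrix.conjTranspose_mul]
    calc Uᴴ * Cᴴ * (C * U) = Uᴴ * (Cᴴ * C) * U := by noncomm_ring
      _ = Uᴴ * (U * diagonal (fun i => (μ i : ℂ)) * Uᴴ) * U := by rw [hspec]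
      _ = (Uᴴ * U) * diagonal (fun i => (μ i : ℂ)) * (Uᴴ * U) := by noncomm_ring
      _ = diagonal (fun i => (μ i : ℂ)) := by rw [hU2]; simp
  have colμ : ∀ j, ∑ i, Complex.normSq (R i j) = μ j := by
    intro j
    have := diag_conjTranspose_mul R j
    rw [hRR, Matrix.diagonal_apply_eq] at this
    exact (Complex.ofReal_inj.mp this).symm
  set a : n → ℝ := fun j => Real.sqrt (∑ i, Complex.normSq (P i j)) with hadef
  set b : n → ℝ := fun j => Real.sqrt (∑ i, Complex.normSq (Q i j)) with hbdef
  set T := ((Cᴴ * C) ^ k).trace.re with hTdef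
  have hT : T = ∑ j, μ j ^ k := trace_pow_psd hPSD k
  have hT0 : 0 ≤ T := trace_pow_psd_nonneg hPSD k
  -- key pointwise inequality
  have key : ∀ j, μ j ^ k ≤ lam j ^ (2 * k - 1) * (a j + b j) := by
    intro j
    have hsplit : μ j = (∑ i, (starRingEnd ℂ) (R i j) * P i j).re
        + (∑ i, (starRingEnd ℂ) (R i j) * Q i j).re := by
      have : ((μ j : ℝ) : ℂ) = (∑ i, (starRingEnd ℂ) (R i j) * P i j)
          + (∑ i, (starRingEnd ℂ) (R i j) * Q i j) := by
        rw [← colμ j]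
        push_cast
        rw [← Finset.sum_add_distrib]
        refine Finset.sum_congr rfl fun i _ => ?_
        rw [← mul_add, ← hRPQ i j, Complex.normSq_eq_conj_mul_self]
      have := congrArg Complex.re this
      simpa using this
    have h1 : (∑ i, (starRingEnd ℂ) (R i j) * P i j).re ≤ lam j * a j := by
      have := col_cs (fun i => R i j) (fun i => P i j)
      rw [colμ j] at this
      exact this
    have h2 : (∑ i, (starRingEnd ℂ) (R i j) * Q i j).re ≤ lam j * b j := by
      have := col_cs (fun i => R i j) (fun i => Q i j)
      rw [colμ j] at this
      exact this
    have hμle : μ j ≤ lam j * (a j + b j) := by rw [mul_add]; rw [hsplit]; linarith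
    calc μ j ^ k = μ j ^ (k - 1) * μ j := by
          rw [← pow_succ]
          congr 1
          omega
      _ ≤ μ j ^ (k - 1) * (lam j * (a j + b j)) := by
          apply mul_le_mul_of_nonneg_left hμle (pow_nonneg (hμ0 j) _)
      _ = lam j ^ (2 * k - 1) * (a j + b j) := by
          rw [← hlamsq j, ← pow_mul, ← mul_assoc, ← pow_succ]
          congr 2
          omega
  have hsumkey : T ≤ (∑ j, lam j ^ (2 * k - 1) * a j) + (∑ j, lam j ^ (2 * k - 1) * b j) := by
    rw [hT, ← Finset.sum_add_distrib]
    refine Finset.sum_le_sum fun j _ => ?_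
    rw [← mul_add]
    exact key j
  -- generic Hölder piece
  set e : ℝ := 1 / (2 * (k : ℝ)) with hedef
  have hepos : 0 < e := by positivity
  have hgen : ∀ M : Matrix n n ℂ,
      (∑ j, lam j ^ (2 * k - 1) * Real.sqrt (∑ i, Complex.normSq ((M * U) i j)))
        ≤ T ^ (1 - e) * (((Mᴴ * M) ^ k).trace.re) ^ e := by
    intro M
    set c : n → ℝ := fun j => Real.sqrt (∑ i, Complex.normSq ((M * U) i j)) with hcdef
    have hc0 : ∀ j, 0 ≤ c j := fun j => Real.sqrt_nonneg _
    have hXP : ((M * U)ᴴ * (M * U)).PosSemidef := posSemidef_conjTranspose_mul_self _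
    have hdiag : ∀ j, (((M * U)ᴴ * (M * U)) j j).re = ∑ i, Complex.normSq ((M * U) i j) := by
      intro j
      rw [diag_conjTranspose_mul]
      exact Complex.ofReal_re _
    have htr : (((M * U)ᴴ * (M * U)) ^ k).trace = ((Mᴴ * M) ^ k).trace := by
      have h1 : (M * U)ᴴ * (M * U) = Uᴴ * (Mᴴ * M) * U := by
        rw [Matrix.conjTranspose_mul]; noncomm_ring
      have h2 : (Uᴴ * (Mᴴ * M) * U) ^ k = Uᴴ * (Mᴴ * M) ^ k * U := by
        have := conj_pow_aux Uᴴ (Mᴴ * M) (by rw [Matrix.conjTranspose_conjTranspose]; exact hU2)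
          (by rw [Matrix.conjTranspose_conjTranspose]; exact hU1) k
        rwa [Matrix.conjTranspose_conjTranspose] at this
      rw [h1, h2, Matrix.trace_mul_cycle, hU1, Matrix.one_mul]
    have hsum2k : ∑ j, c j ^ (2 * k) ≤ ((Mᴴ * M) ^ k).trace.re := by
      have hb : ∀ j, c j ^ (2 * k) = (((M * U)ᴴ * (M * U)) j j).re ^ k := by
        intro j
        rw [hdiag j, hcdef]
        rw [pow_mul, Real.sq_sqrt (Finset.sum_nonneg fun i _ => Complex.normSq_nonneg _)]
      calc ∑ j, c j ^ (2 * k) = ∑ j, (((M * U)ᴴ * (M * U)) j j).re ^ k :=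
            Finset.sum_congr rfl fun j _ => hb j
        _ ≤ ∑ j, (((((M * U)ᴴ * (M * U)) ^ k)) j j).re :=
            Finset.sum_le_sum fun j _ => psd_diag_pow_le hXP k j
        _ = (((M * U)ᴴ * (M * U)) ^ k).trace.re := by
            rw [Matrix.trace, Complex.re_sum]; rfl
        _ = ((Mᴴ * M) ^ k).trace.re := by rw [htr]
    have hMM0 : 0 ≤ ((Mᴴ * M) ^ k).trace.re :=
      trace_pow_psd_nonneg (posSemidef_conjTranspose_mul_self M) k
    have hpq : (Real.conjExponent (2 * (k:ℝ))).HolderConjugate (2 * (k:ℝ)) :=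
      (Real.HolderConjugate.conjExponent h2k).symm
    have hold := Real.inner_le_Lp_mul_Lq_of_nonneg Finset.univ hpq
      (f := fun j => lam j ^ (2 * k - 1)) (g := c)
      (fun j _ => pow_nonneg (hlam0 j) _) (fun j _ => hc0 j)
    -- simplify first factor
    have hfp : ∀ j, (lam j ^ (2 * k - 1) : ℝ) ^ (Real.conjExponent (2 * (k:ℝ))) = μ j ^ k := by
      intro j
      have hcast : ((2 * k - 1 : ℕ) : ℝ) = 2 * (k:ℝ) - 1 := by
        push_cast [Nat.cast_sub (by omega : 1 ≤ 2 * k)]; ring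
      rw [← Real.rpow_natCast (lam j) (2 * k - 1), ← Real.rpow_mul (hlam0 j), hcast]
      have : (2 * (k:ℝ) - 1) * Real.conjExponent (2 * (k:ℝ)) = 2 * (k:ℝ) := by
        have h2k1 : (2*(k:ℝ)-1) ≠ 0 := by linarith
        rw [Real.conjExponent]
        field_simp
      rw [this]
      rw [show ((2:ℝ) * k) = ((2 * k : ℕ) : ℝ) by push_cast; ring]
      rw [Real.rpow_natCast, pow_mul, hlamsq j]
    have hsecond : (∑ j, c j ^ (2 * (k:ℝ))) ^ e ≤ (((Mᴴ * M) ^ k).trace.re) ^ e := by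
      apply Real.rpow_le_rpow (Finset.sum_nonneg fun j _ => Real.rpow_nonneg (hc0 j) _)
        _ hepos.le
      calc ∑ j, c j ^ (2 * (k:ℝ)) = ∑ j, c j ^ (2 * k) := by
            refine Finset.sum_congr rfl fun j _ => ?_
            rw [show ((2:ℝ) * k) = ((2 * k : ℕ) : ℝ) by push_cast; ring, Real.rpow_natCast]
        _ ≤ _ := hsum2k
    have hfirst : (∑ j, (lam j ^ (2 * k - 1) : ℝ) ^ (Real.conjExponent (2 * (k:ℝ)))) ^
        (1 / Real.conjExponent (2 * (k:ℝ))) = T ^ (1 - e) := by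
      have hsum : (∑ j, (lam j ^ (2 * k - 1) : ℝ) ^ (Real.conjExponent (2 * (k:ℝ)))) = T := by
        rw [hT]; exact Finset.sum_congr rfl fun j _ => hfp j
      rw [hsum]
      congr 1
      rw [one_div, hedef, one_div, hpq.symm.one_sub_inv]
    calc (∑ j, lam j ^ (2 * k - 1) * c j)
        ≤ (∑ j, (lam j ^ (2 * k - 1) : ℝ) ^ (Real.conjExponent (2 * (k:ℝ)))) ^
            (1 / Real.conjExponent (2 * (k:ℝ))) * (∑ j, c j ^ (2 * (k:ℝ))) ^ (1 / (2 * (k:ℝ))) :=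
          hold
      _ = T ^ (1 - e) * (∑ j, c j ^ (2 * (k:ℝ))) ^ e := by rw [hfirst, hedef]
      _ ≤ T ^ (1 - e) * (((Mᴴ * M) ^ k).trace.re) ^ e := by
          apply mul_le_mul_of_nonneg_left hsecond (Real.rpow_nonneg hT0 _)
  set SA := ((Aᴴ * A) ^ k).trace.re with hSAdef
  set SB := ((Bᴴ * B) ^ k).trace.re with hSBdef
  have hSA0 : 0 ≤ SA := trace_pow_psd_nonneg (posSemidef_conjTranspose_mul_self A) k
  have hSB0 : 0 ≤ SB := trace_pow_psd_nonneg (posSemidef_conjTranspose_mul_self B) k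
  have hmain : T ≤ T ^ (1 - e) * (SA ^ e + SB ^ e) := by
    calc T ≤ (∑ j, lam j ^ (2 * k - 1) * a j) + (∑ j, lam j ^ (2 * k - 1) * b j) := hsumkey
      _ ≤ T ^ (1 - e) * SA ^ e + T ^ (1 - e) * SB ^ e := add_le_add (hgen A) (hgen B)
      _ = T ^ (1 - e) * (SA ^ e + SB ^ e) := by ring
  rcases hT0.eq_or_lt with hT0' | hTpos
  · rw [← hT0', Real.zero_rpow (by positivity)]
    exact add_nonneg (Real.rpow_nonneg hSA0 _) (Real.rpow_nonneg hSB0 _)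
  · have h2 : T ^ (1 - e) * T ^ e ≤ T ^ (1 - e) * (SA ^ e + SB ^ e) := by
      rw [← Real.rpow_add hTpos, sub_add_cancel, Real.rpow_one]
      exact hmain
    exact le_of_mul_le_mul_left h2 (Real.rpow_pos_of_pos hTpos _)

end MatrixLemmas


lemma sum_pow_le_pow_sum {ι : Type*} (s : Finset ι) (a : ι → ℝ)
    (ha : ∀ i ∈ s, 0 ≤ a i) {k : ℕ} (hk : 1 ≤ k) :
    ∑ i ∈ s, a i ^ k ≤ (∑ i ∈ s, a i) ^ k := by
  have hs : 0 ≤ ∑ i ∈ s, a i := Finset.sum_nonneg ha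
  calc ∑ i ∈ s, a i ^ k ≤ ∑ i ∈ s, a i * (∑ j ∈ s, a j) ^ (k - 1) := by
        refine Finset.sum_le_sum fun i hi => ?_
        have h1 : a i ^ k = a i * a i ^ (k - 1) := by
          rw [← pow_succ']
          congr 1
          omega
        rw [h1]
        exact mul_le_mul_of_nonneg_left
          (pow_le_pow_left₀ (ha i hi) (Finset.single_le_sum ha hi) _) (ha i hi)
    _ = (∑ i ∈ s, a i) ^ k := by
        rw [← Finset.sum_mul, ← pow_succ']
        congr 1
        omega

section GroupPart
set_option linter.unusedSectionVars false
open Matrix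

variable {G : Type*} [Group G] [Fintype G] [DecidableEq G]

noncomputable def conv (u v : G → ℂ) : G → ℂ := fun x => ∑ y, u y * v (y⁻¹ * x)

noncomputable def Lmat (u : G → ℂ) : Matrix G G ℂ := Matrix.of fun x z => u (x * z⁻¹)

lemma Lmat_conv (u v : G → ℂ) : Lmat (conv u v) = Lmat u * Lmat v := by
  ext x z
  show conv u v (x * z⁻¹) = ∑ w, u (x * w⁻¹) * v (w * z⁻¹)
  rw [conv]
  refine Fintype.sum_equiv ((Equiv.inv G).trans (Equiv.mulRight x)) _ _ fun y => ?_
  simp only [Equiv.trans_apply, Equiv.inv_apply, Equiv.coe_mulRight]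
  congr 1
  · congr 1
    group
  · congr 1
    group

noncomputable def Wgen : ∀ {k : ℕ}, (Fin k → G → ℂ) → G → ℂ :=
  fun {k} F x => ∑ t : Fin k → G, if (List.ofFn t).prod = x then ∏ i, F i (t i) else 0

lemma Wgen_zero (F : Fin 0 → G → ℂ) : Wgen F = fun x => if (1 : G) = x then 1 else 0 := by
  funext x
  rw [Wgen]
  rw [Finset.univ_unique, Finset.sum_singleton]
  simp

lemma Wgen_succ {k : ℕ} (F : Fin (k + 1) → G → ℂ) :
    Wgen F = conv (F 0) (Wgen fun i => F i.succ) := by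
  funext x
  rw [Wgen, conv]
  rw [← Equiv.sum_comp (Fin.consEquiv (fun _ : Fin (k+1) => G))
      (fun t => if (List.ofFn t).prod = x then ∏ i, F i (t i) else 0)]
  rw [Fintype.sum_prod_type]
  refine Finset.sum_congr rfl fun y _ => ?_
  rw [Wgen, Finset.mul_sum]
  refine Finset.sum_congr rfl fun t _ => ?_
  have hc : ((Fin.consEquiv (fun _ : Fin (k+1) => G)) (y, t) : Fin (k+1) → G) = Fin.cons y t := rfl
  simp only [hc]
  have hprod : (List.ofFn (Fin.cons y t : Fin (k+1) → G)).prod = y * (List.ofFn t).prod := by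
    rw [List.ofFn_succ]
    simp [Fin.cons_succ]
  have hvals : (∏ i, F i ((Fin.cons y t : Fin (k+1) → G) i)) = F 0 y * ∏ i, F i.succ (t i) := by
    rw [Fin.prod_univ_succ]
    simp [Fin.cons_succ]
  rw [hprod, hvals, mul_ite, mul_zero]
  simp only [eq_inv_mul_iff_mul_eq]

lemma Lmat_Wgen : ∀ {k : ℕ} (F : Fin k → G → ℂ),
    Lmat (Wgen F) = (List.ofFn fun i => Lmat (F i)).prod := by
  intro k
  induction k with
  | zero =>
      intro F
      rw [Wgen_zero]
      ext x z
      show (if (1:G) = x * z⁻¹ then (1:ℂ) else 0) = (1 : Matrix G G ℂ) x z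
      rw [Matrix.one_apply]
      congr 1
      simp [eq_comm, mul_inv_eq_one]
  | succ k ih =>
      intro F
      rw [Wgen_succ, Lmat_conv, ih, List.ofFn_succ, List.prod_cons]

lemma Wfun_eq {k : ℕ} (h : Fin k → G → ℂ) :
    Wfun h = Wgen (fun i => if (i : ℕ) % 2 = 0 then h i
      else fun a => (starRingEnd ℂ) (h i a⁻¹)) := by
  funext x
  rw [Wfun, Wgen]
  have hinv : Function.Involutive
      (fun (t : Fin k → G) => (fun i => if (i : ℕ) % 2 = 0 then t i else (t i)⁻¹)) := by
    intro t
    funext i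
    by_cases hi : (i : ℕ) % 2 = 0 <;> simp [hi]
  refine Fintype.sum_equiv (Function.Involutive.toPerm _ hinv) _ _ fun t => ?_
  have hcond : altProd t = (List.ofFn ((Function.Involutive.toPerm _ hinv) t)).prod := by
    rw [altProd]
    rfl
  rw [← hcond]
  congr 1
  refine Finset.prod_congr rfl fun i _ => ?_
  by_cases hi : (i : ℕ) % 2 = 0 <;> simp [hi, Function.Involutive.toPerm]

lemma Lmat_star (f : G → ℂ) : Lmat (fun a => (starRingEnd ℂ) (f a⁻¹)) = (Lmat f)ᴴ := by
  ext x z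
  show (starRingEnd ℂ) (f (x * z⁻¹)⁻¹) = (starRingEnd ℂ) (Lmat f z x)
  congr 1
  show f (x * z⁻¹)⁻¹ = f (z * x⁻¹)
  rw [_root_.mul_inv_rev, inv_inv]

section AltWord
variable {n : Type*} [Fintype n] [DecidableEq n]

noncomputable def altword (M : Matrix n n ℂ) (k : ℕ) : Matrix n n ℂ :=
  (List.ofFn fun i : Fin k => if (i : ℕ) % 2 = 0 then M else Mᴴ).prod

lemma altword_zero (M : Matrix n n ℂ) : altword M 0 = 1 := by
  simp [altword]

lemma altword_one (M : Matrix n n ℂ) : altword M 1 = M := by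
  simp [altword]

lemma altword_succ_succ (M : Matrix n n ℂ) (k : ℕ) :
    altword M (k + 2) = M * Mᴴ * altword M k := by
  have h : (List.ofFn fun i : Fin (k+2) => if (i : ℕ) % 2 = 0 then M else Mᴴ)
      = M :: Mᴴ :: (List.ofFn fun i : Fin k => if (i : ℕ) % 2 = 0 then M else Mᴴ) := by
    rw [List.ofFn_succ, List.ofFn_succ]
    have hfun : (fun i : Fin k =>
        if ((i.succ.succ : Fin (k + 2)) : ℕ) % 2 = 0 then M else Mᴴ)
        = fun i : Fin k => if (i : ℕ) % 2 = 0 then M else Mᴴ := by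
      funext i
      have h2 : ((i : ℕ) + 1 + 1) % 2 = (i : ℕ) % 2 := by omega
      simp [Fin.val_succ, h2]
    simp only [Fin.val_succ, Fin.val_zero] at hfun ⊢
    rw [hfun]
    norm_num
  rw [altword, h, List.prod_cons, List.prod_cons, ← altword, ← mul_assoc]

lemma altword_even (M : Matrix n n ℂ) : ∀ m, altword M (2 * m) = (M * Mᴴ) ^ m := by
  intro m
  induction m with
  | zero => simpa using altword_zero M
  | succ m ih =>
      have h : 2 * (m + 1) = 2 * m + 2 := by ring
      rw [h, altword_succ_succ, ih, pow_succ']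

lemma altword_odd (M : Matrix n n ℂ) : ∀ m, altword M (2 * m + 1) = (M * Mᴴ) ^ m * M := by
  intro m
  induction m with
  | zero => simpa using altword_one M
  | succ m ih =>
      have h : 2 * (m + 1) + 1 = (2 * m + 1) + 2 := by ring
      rw [h, altword_succ_succ, ih, pow_succ']
      noncomm_ring

lemma aux1 (M : Matrix n n ℂ) : ∀ j, Mᴴ * (M * Mᴴ) ^ j * M = (Mᴴ * M) ^ (j + 1) := by
  intro j
  induction j with
  | zero => simp
  | succ j ih =>
      calc Mᴴ * (M * Mᴴ) ^ (j + 1) * M = Mᴴ * ((M * Mᴴ) ^ j * (M * Mᴴ)) * M := by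
            rw [pow_succ]
        _ = (Mᴴ * (M * Mᴴ) ^ j * M) * (Mᴴ * M) := by noncomm_ring
        _ = (Mᴴ * M) ^ (j + 1) * (Mᴴ * M) := by rw [ih]
        _ = (Mᴴ * M) ^ (j + 1 + 1) := by rw [← pow_succ]

lemma aux2 (M : Matrix n n ℂ) : ∀ j, (M * Mᴴ) ^ (j + 1) = M * (Mᴴ * M) ^ j * Mᴴ := by
  intro j
  induction j with
  | zero => simp
  | succ j ih =>
      calc (M * Mᴴ) ^ (j + 1 + 1) = (M * Mᴴ) ^ (j + 1) * (M * Mᴴ) := by rw [pow_succ]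
        _ = (M * (Mᴴ * M) ^ j * Mᴴ) * (M * Mᴴ) := by rw [ih]
        _ = M * ((Mᴴ * M) ^ j * (Mᴴ * M)) * Mᴴ := by noncomm_ring
        _ = M * (Mᴴ * M) ^ (j + 1) * Mᴴ := by rw [← pow_succ]

lemma conjT_mulMH_pow (M : Matrix n n ℂ) (m : ℕ) : ((M * Mᴴ) ^ m)ᴴ = (M * Mᴴ) ^ m := by
  rw [Matrix.conjTranspose_pow, Matrix.conjTranspose_mul, Matrix.conjTranspose_conjTranspose]

lemma trace_altword (M : Matrix n n ℂ) (k : ℕ) :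
    ((altword M k)ᴴ * altword M k).trace = ((Mᴴ * M) ^ k).trace := by
  rcases Nat.even_or_odd k with ⟨m, hm⟩ | ⟨m, hm⟩
  · have hk : k = 2 * m := by omega
    subst hk
    rw [altword_even, conjT_mulMH_pow, ← pow_add]
    rcases Nat.eq_zero_or_pos m with hm0 | hm0
    · subst hm0; simp
    · have h : m + m = (m + m - 1) + 1 := by omega
      rw [h, aux2, Matrix.trace_mul_cycle, ← pow_succ']
      have h3 : m + m - 1 + 1 = 2 * m := by omega
      rw [h3]
  · subst hm
    rw [altword_odd]
    have hconj : ((M * Mᴴ) ^ m * M)ᴴ = Mᴴ * (M * Mᴴ) ^ m := by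
      rw [Matrix.conjTranspose_mul, conjT_mulMH_pow]
    rw [hconj]
    have : Mᴴ * (M * Mᴴ) ^ m * ((M * Mᴴ) ^ m * M) = Mᴴ * (M * Mᴴ) ^ (m + m) * M := by
      rw [pow_add]; noncomm_ring
    rw [Matrix.mul_assoc, ← Matrix.mul_assoc, this, aux1]
    congr 2
    omega

end AltWord

end GroupPart

section Final
open Matrix
open scoped ComplexOrder
variable {G : Type*} [Group G] [Fintype G] [DecidableEq G]

lemma card_TkF1 (k : ℕ) (f : G → ℂ) :
    (Fintype.card G : ℝ) * TkF1 k f = ((((Lmat f)ᴴ * Lmat f) ^ k).trace).re := by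
  have hW : Lmat (Wfun (fun _ : Fin k => f)) = altword (Lmat f) k := by
    rw [Wfun_eq, Lmat_Wgen, altword]
    refine congrArg _ (congrArg _ (funext fun i => ?_))
    by_cases hi : (i : ℕ) % 2 = 0
    · simp [hi]
    · simp [hi, Lmat_star]
  have htr := trace_altword (Lmat f) k
  rw [← hW] at htr
  set P := Lmat (Wfun (fun _ : Fin k => f)) with hPdef
  have h1 : (Pᴴ * P).trace = ((∑ z, ∑ x, Complex.normSq (P x z) : ℝ) : ℂ) := by
    rw [Matrix.trace]
    push_cast
    refine Finset.sum_congr rfl fun z _ => ?_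
    rw [Matrix.diag_apply, diag_conjTranspose_mul]
    push_cast
    rfl
  have h2 : ∀ z : G, ∑ x, Complex.normSq (P x z) = TkF1 k f := by
    intro z
    rw [TkF1]
    refine Fintype.sum_equiv (Equiv.mulRight z⁻¹) _ _ fun x => ?_
    show Complex.normSq (Wfun (fun _ : Fin k => f) (x * z⁻¹))
      = ‖Wfun (fun _ : Fin k => f) (x * z⁻¹)‖ ^ 2
    rw [Complex.sq_norm]
  have h3 : (Pᴴ * P).trace.re = (Fintype.card G : ℝ) * TkF1 k f := by
    rw [h1, Complex.ofReal_re]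
    rw [Finset.sum_congr rfl fun z _ => h2 z, Finset.sum_const, Finset.card_univ,
      nsmul_eq_mul]
  rw [← h3, htr]

theorem stmt8' {G : Type*} [Group G] [Fintype G] [DecidableEq G] (k : ℕ) (hk : 2 ≤ k)
    (f g : G → ℂ) :
    TkF1 k (f + g) ^ (1 / (2 * (k : ℝ))) ≤
        TkF1 k f ^ (1 / (2 * (k : ℝ))) + TkF1 k g ^ (1 / (2 * (k : ℝ))) ∧
      (∑ x : G, ‖f x‖ ^ (2 * k)) ^ (1 / (2 * (k : ℝ))) ≤
        TkF1 k f ^ (1 / (2 * (k : ℝ))) := by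
  have hk1 : 1 ≤ k := le_trans (by norm_num) hk
  have hc : (0:ℝ) < Fintype.card G := by
    exact_mod_cast Fintype.card_pos
  have hS0 : ∀ u : G → ℂ, 0 ≤ ((((Lmat u)ᴴ * Lmat u) ^ k).trace).re := fun u =>
    trace_pow_psd_nonneg (Matrix.posSemidef_conjTranspose_mul_self _) k
  have hTk : ∀ u : G → ℂ, TkF1 k u = ((((Lmat u)ᴴ * Lmat u) ^ k).trace).re / Fintype.card G := by
    intro u
    rw [← card_TkF1 k u]
    field_simp
  have hMN : Lmat (f + g) = Lmat f + Lmat g := by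
    ext x z
    show (f + g) (x * z⁻¹) = f (x * z⁻¹) + g (x * z⁻¹)
    rfl
  set e : ℝ := 1 / (2 * (k : ℝ)) with hedef
  have hepos : (0:ℝ) < e := by positivity
  have hcpow : (0:ℝ) < (Fintype.card G : ℝ) ^ e := Real.rpow_pos_of_pos hc e
  constructor
  · have hcore := schatten_core (n := G) hk1 (Lmat f) (Lmat g)
    have hSsum0 : 0 ≤ (((Lmat f + Lmat g)ᴴ * (Lmat f + Lmat g)) ^ k).trace.re :=
      trace_pow_psd_nonneg (Matrix.posSemidef_conjTranspose_mul_self _) k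
    rw [hTk (f + g), hTk f, hTk g, hMN]
    calc ((((Lmat f + Lmat g)ᴴ * (Lmat f + Lmat g)) ^ k).trace.re / Fintype.card G) ^ e
        = (((Lmat f + Lmat g)ᴴ * (Lmat f + Lmat g)) ^ k).trace.re ^ e /
            (Fintype.card G : ℝ) ^ e := Real.div_rpow hSsum0 hc.le e
      _ ≤ (((((Lmat f)ᴴ * Lmat f) ^ k).trace.re) ^ e
            + ((((Lmat g)ᴴ * Lmat g) ^ k).trace.re) ^ e) / (Fintype.card G : ℝ) ^ e :=
          (div_le_div_iff_of_pos_right hcpow).mpr hcore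
      _ = ((((Lmat f)ᴴ * Lmat f) ^ k).trace.re) ^ e / (Fintype.card G : ℝ) ^ e
            + ((((Lmat g)ᴴ * Lmat g) ^ k).trace.re) ^ e / (Fintype.card G : ℝ) ^ e :=
          add_div _ _ _
      _ = (((((Lmat f)ᴴ * Lmat f) ^ k).trace.re) / Fintype.card G) ^ e
            + (((((Lmat g)ᴴ * Lmat g) ^ k).trace.re) / Fintype.card G) ^ e := by
          rw [Real.div_rpow (hS0 f) hc.le, Real.div_rpow (hS0 g) hc.le]
  · have hdiag : ∀ z : G, (((Lmat f)ᴴ * Lmat f) z z).re = ∑ x, Complex.normSq (f x) := by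
      intro z
      rw [diag_conjTranspose_mul, Complex.ofReal_re]
      refine Fintype.sum_equiv (Equiv.mulRight z⁻¹) _ _ fun x => ?_
      rfl
    have h1 : (Fintype.card G : ℝ) * (∑ x, Complex.normSq (f x)) ^ k
        ≤ ((((Lmat f)ᴴ * Lmat f) ^ k).trace).re := by
      have hp := fun z : G =>
        psd_diag_pow_le (Matrix.posSemidef_conjTranspose_mul_self (Lmat f)) k z
      have htrace : ((((Lmat f)ᴴ * Lmat f) ^ k).trace).re
          = ∑ z : G, ((((Lmat f)ᴴ * Lmat f) ^ k) z z).re := by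
        rw [Matrix.trace, Complex.re_sum]
        rfl
      rw [htrace]
      calc (Fintype.card G : ℝ) * (∑ x, Complex.normSq (f x)) ^ k
          = ∑ _z : G, (∑ x, Complex.normSq (f x)) ^ k := by
            rw [Finset.sum_const, Finset.card_univ, nsmul_eq_mul]
        _ ≤ ∑ z : G, ((((Lmat f)ᴴ * Lmat f) ^ k) z z).re := by
            refine Finset.sum_le_sum fun z _ => ?_
            rw [← hdiag z]
            exact hp z
    have h2 : (∑ x, ‖f x‖ ^ (2 * k)) ≤ (∑ x, Complex.normSq (f x)) ^ k := by
      calc (∑ x, ‖f x‖ ^ (2 * k)) = ∑ x, Complex.normSq (f x) ^ k :=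
            Finset.sum_congr rfl fun x _ => by rw [pow_mul, Complex.sq_norm]
        _ ≤ (∑ x, Complex.normSq (f x)) ^ k :=
            sum_pow_le_pow_sum _ _ (fun i _ => Complex.normSq_nonneg _) hk1
    have h3 : (∑ x, ‖f x‖ ^ (2 * k)) ≤ TkF1 k f := by
      rw [hTk f, le_div_iff₀ hc]
      calc (∑ x, ‖f x‖ ^ (2 * k)) * Fintype.card G
          ≤ (∑ x, Complex.normSq (f x)) ^ k * Fintype.card G := by
            exact mul_le_mul_of_nonneg_right h2 hc.le
        _ = (Fintype.card G : ℝ) * (∑ x, Complex.normSq (f x)) ^ k := mul_comm _ _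
        _ ≤ _ := h1
    exact Real.rpow_le_rpow
      (Finset.sum_nonneg fun x _ => pow_nonneg (norm_nonneg _) _) h3 hepos.le

end Final

theorem stmt8 {G : Type*} [Group G] [Fintype G] [DecidableEq G] (k : ℕ) (hk : 2 ≤ k)
    (f g : G → ℂ) :
    TkF1 k (f + g) ^ (1 / (2 * (k : ℝ))) ≤
        TkF1 k f ^ (1 / (2 * (k : ℝ))) + TkF1 k g ^ (1 / (2 * (k : ℝ))) ∧
      (∑ x : G, ‖f x‖ ^ (2 * k)) ^ (1 / (2 * (k : ℝ))) ≤
        TkF1 k f ^ (1 / (2 * (k : ℝ))) := by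
  exact stmt8' k hk f g
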